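/- For 0 < x ≤ 2, with r = 1/√(2x), θ = arctan(√((2−x)/x)) and ω = arctan(r sin θ/(1 − r cos θ)), the expression (ω + θ)·log r appearing in the triple-uniform-product density is well-defined and continuous on (0, 2), and the full density f₀(x) = (2/π)(√((2−x)/x) − arctan√((2−x)/x) − (1/2)(ω+θ)log r + (1/4)(Cl₂(2(ω+θ)) − Cl₂(2ω) − Cl₂(2θ))) tends to 0 as x → 2⁻. -/

import Mathlib

open Real

/-- The Clausen function of order 2. -/
noncomputable def Cl2 (α : ℝ) : ℝ := ∑' k : ℕ, Real.sin (((k : ℝ) + 1) * α) / ((k : ℝ) + 1) ^ 2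

noncomputable def rr (x : ℝ) : ℝ := 1 / Real.sqrt (2 * x)

noncomputable def θθ (x : ℝ) : ℝ := Real.arctan (Real.sqrt ((2 - x) / x))

noncomputable def ωω (x : ℝ) : ℝ :=
  Real.arctan (rr x * Real.sin (θθ x) / (1 - rr x * Real.cos (θθ x)))

/-- Closed-form density of the product of the random amplitude by three independent
uniform variables (restricted to positive abscissae). -/
noncomputable def f0 (x : ℝ) : ℝ :=
  (2 / π) * (Real.sqrt ((2 - x) / x) - Real.arctan (Real.sqrt ((2 - x) / x))
    - (1/2) * (ωω x + θθ x) * Real.log (rr x)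
    + (1/4) * (Cl2 (2 * (ωω x + θθ x)) - Cl2 (2 * ωω x) - Cl2 (2 * θθ x)))

lemma cl2_cont : Continuous Cl2 := by
  apply continuous_tsum (u := fun k : ℕ => 1 / ((k:ℝ)+1)^2)
  · intro i; fun_prop
  · have : Summable (fun n : ℕ => 1 / ((n:ℝ))^2) := by
      rw [Real.summable_one_div_nat_pow]; norm_num
    have := (summable_nat_add_iff 1).2 this
    simpa using this
  · intro n x
    rw [norm_div, Real.norm_eq_abs, Real.norm_eq_abs]
    have hpos : (0:ℝ) < ((n:ℝ)+1)^2 := by positivity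
    rw [abs_of_pos hpos]
    gcongr
    exact Real.abs_sin_le_one _

lemma cl2_zero : Cl2 0 = 0 := by simp [Cl2]

lemma denom_eq {x : ℝ} (hx : 0 < x) (hx2 : x ≤ 2) : 1 - rr x * Real.cos (θθ x) = 1/2 := by
  have hnn : 0 ≤ (2 - x) / x := div_nonneg (by linarith) hx.le
  have hc : Real.cos (θθ x) = 1 / Real.sqrt (1 + Real.sqrt ((2-x)/x) ^ 2) := by
    rw [θθ, Real.cos_arctan]
  have h1 : 1 + (2 - x) / x = 2 / x := by field_simp; ring
  have h2 : Real.sqrt (2 * x) * Real.sqrt (2 / x) = 2 := by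
    rw [← Real.sqrt_mul (by positivity)]
    have : 2 * x * (2 / x) = 4 := by field_simp; ring
    rw [this, show (4:ℝ) = 2^2 by norm_num, Real.sqrt_sq (by norm_num)]
  rw [hc, Real.sq_sqrt hnn, h1, rr, div_mul_div_comm, one_mul, h2]
  norm_num

lemma rr_pos {x : ℝ} (hx : 0 < x) : 0 < rr x := by
  rw [rr]; positivity

lemma contAt_sq {x : ℝ} (hx : 0 < x) :
    ContinuousAt (fun x : ℝ => Real.sqrt ((2 - x) / x)) x := by
  apply Real.continuous_sqrt.continuousAt.comp
  exact (continuousAt_const.sub continuousAt_id).div continuousAt_id hx.ne'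

lemma contAt_rr {x : ℝ} (hx : 0 < x) : ContinuousAt rr x := by
  unfold rr
  exact continuousAt_const.div
    (Real.continuous_sqrt.continuousAt.comp (continuousAt_const.mul continuousAt_id))
    (by positivity)

lemma contAt_θθ {x : ℝ} (hx : 0 < x) : ContinuousAt θθ x :=
  Real.continuous_arctan.continuousAt.comp (contAt_sq hx)

lemma contAt_ωω {x : ℝ} (hx : 0 < x) (hx2 : x ≤ 2) : ContinuousAt ωω x := by
  unfold ωω
  apply Real.continuous_arctan.continuousAt.comp
  apply ContinuousAt.div
  · exact (contAt_rr hx).mul (Real.continuous_sin.continuousAt.comp (contAt_θθ hx))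
  · exact continuousAt_const.sub
      ((contAt_rr hx).mul (Real.continuous_cos.continuousAt.comp (contAt_θθ hx)))
  · rw [denom_eq hx hx2]; norm_num

lemma θθ_two : θθ 2 = 0 := by norm_num [θθ]

lemma ωω_two : ωω 2 = 0 := by simp [ωω, θθ_two]

lemma rr_two : rr 2 = 1/2 := by
  rw [rr, show (2:ℝ)*2 = 2^2 by norm_num, Real.sqrt_sq (by norm_num)]

theorem triple_uniform_density_boundary :
    ContinuousOn (fun x => (ωω x + θθ x) * Real.log (rr x)) (Set.Ioo (0:ℝ) 2) ∧
    Filter.Tendsto f0 (nhdsWithin 2 (Set.Iio 2)) (nhds 0) := by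
  constructor
  · intro x hx
    exact (((contAt_ωω hx.1 hx.2.le).add (contAt_θθ hx.1)).mul
      ((Real.continuousAt_log (rr_pos hx.1).ne').comp (contAt_rr hx.1))).continuousWithinAt
  · have h2 : (0:ℝ) < 2 := by norm_num
    have hcont : ContinuousAt f0 2 := by
      unfold f0
      apply ContinuousAt.mul continuousAt_const
      apply ContinuousAt.add
      · apply ContinuousAt.sub
        · exact (contAt_sq h2).sub
            (Real.continuous_arctan.continuousAt.comp (contAt_sq h2))
        · exact (continuousAt_const.mul ((contAt_ωω h2 le_rfl).add (contAt_θθ h2))).mul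
            ((Real.continuousAt_log (rr_pos h2).ne').comp (contAt_rr h2))
      · apply ContinuousAt.mul continuousAt_const
        apply ContinuousAt.sub
        apply ContinuousAt.sub
        · exact cl2_cont.continuousAt.comp
            (continuousAt_const.mul ((contAt_ωω h2 le_rfl).add (contAt_θθ h2)))
        · exact cl2_cont.continuousAt.comp (continuousAt_const.mul (contAt_ωω h2 le_rfl))
        · exact cl2_cont.continuousAt.comp (continuousAt_const.mul (contAt_θθ h2))
    have hf02 : f0 2 = 0 := by
      simp [f0, θθ_two, ωω_two, cl2_zero]
    have := hcont.continuousWithinAt (s := Set.Iio 2)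
    rw [ContinuousWithinAt, hf02] at this
    exact this
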